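/- Fix m ≥ 1 and let T be an m-binary tree of size nm. Every nonempty m-binary tree decomposes uniquely into m-binary trees T_L, T_{R_1}, …, T_{R_m} as in the recursive definition; define B^(m)_∅ = 1 and B^(m)_T = x · B^(m)_{T_L} · Δ(B^(m)_{T_{R_1}} · Δ(B^(m)_{T_{R_2}} · ⋯ · Δ(B^(m)_{T_{R_m}}) ⋯)) ∈ ℤ[x]. Then for every k ≥ 0, the coefficient of x^k in B^(m)_T(x) equals the number of m-binary trees T' with T' ≤ T in the Tamari order whose leftmost branch contains exactly k nodes. In particular, B^(m)_T(1) equals the number of m-binary trees T' with T' ≤ T, i.e., the number of elements below T in the m-Tamari lattice. -/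

import Mathlib

/-- Planar binary trees: empty, or a node with a left and a right subtree. -/
inductive BinTree : Type where
  | leaf : BinTree
  | node : BinTree → BinTree → BinTree
  deriving DecidableEq

namespace BinTree

/-- Size: number of internal nodes. -/
def size : BinTree → ℕ
  | leaf => 0
  | node l r => l.size + r.size + 1

/-- `sub T o a b` : in the binary-search-tree labelling of `T` shifted by `o`
(its labels are `o+1, …, o+T.size`), the node labelled `a` lies in the subtree
rooted at the node labelled `b`, i.e. `a ⊴_T b`. -/
def sub : BinTree → ℕ → ℕ → ℕ → Prop
  | leaf, _, _, _ => False
  | node l r, o, a, b =>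
      (b = o + l.size + 1 ∧ o + 1 ≤ a ∧ a ≤ o + l.size + r.size + 1) ∨
      l.sub o a b ∨ r.sub (o + l.size + 1) a b

/-- One right rotation, applied at any position of the tree. -/
inductive Rot : BinTree → BinTree → Prop
  | base (A B C : BinTree) : Rot (node (node A B) C) (node A (node B C))
  | left {l l' : BinTree} (r : BinTree) : Rot l l' → Rot (node l r) (node l' r)
  | right (l : BinTree) {r r' : BinTree} : Rot r r' → Rot (node l r) (node l r')

end BinTree

/-- Tamari order: reflexive-transitive closure of right rotation. -/
def tamariLE : BinTree → BinTree → Prop := Relation.ReflTransGen BinTree.Rot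

/-- `incRel T a c` : `a` is below `c` in the initial forest `inc T`. -/
def incRel (T : BinTree) (a c : ℕ) : Prop := a < c ∧ T.sub 0 a c

/-- `decRel T c a` : `c` is below `a` in the final forest `dec T`. -/
def decRel (T : BinTree) (c a : ℕ) : Prop := a < c ∧ T.sub 0 c a

/-- Graft the tree `B` at the leftmost leaf of `S` (as left child of the
leftmost node of `S`; if `S` is empty the result is `B`). -/
def graftL : BinTree → BinTree → BinTree
  | BinTree.leaf, B => B
  | BinTree.node l r, B => BinTree.node (graftL l B) r

/-- Auxiliary construction: from `[T_{R_i}, …, T_{R_m}]`, the subtree rooted at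
the `i`-th new node `x` (empty left child, right subtree `T_{R_i}` with the
next new node grafted at its leftmost leaf). -/
def buildAux : List BinTree → BinTree
  | [] => BinTree.leaf
  | S :: rest => BinTree.node BinTree.leaf (graftL S (buildAux rest))

/-- The right subtree of the root of an `m`-binary tree built from
`[T_{R_1}, …, T_{R_m}]`: it is `T_{R_1}` with, grafted at its leftmost leaf, a
new node carrying `T_{R_2}` (with, grafted at the leftmost leaf of `T_{R_2}`, a
new node carrying `T_{R_3}`, and so on). -/
def buildRight : List BinTree → BinTree
  | [] => BinTree.leaf
  | S :: rest => graftL S (buildAux rest)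

/-- `m`-binary trees, defined recursively: the empty tree, or a root whose left
subtree is an `m`-binary tree `T_L` and whose right subtree is built from a
list `[T_{R_1}, …, T_{R_m}]` of `m`-binary trees by the grafting procedure. -/
inductive IsMBinary (m : ℕ) : BinTree → Prop
  | leaf : IsMBinary m BinTree.leaf
  | node (TL : BinTree) (TRs : List BinTree) :
      TRs.length = m → IsMBinary m TL → (∀ S ∈ TRs, IsMBinary m S) →
      IsMBinary m (BinTree.node TL (buildRight TRs))

/-- A chain of `k` nodes linked by right edges. -/
def rightChain : ℕ → BinTree
  | 0 => BinTree.leaf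
  | k + 1 => BinTree.node BinTree.leaf (rightChain k)

/-- The `(n,m)`-comb: `n` nodes on the leftmost branch, each carrying as right
subtree a chain of `m − 1` nodes linked by right edges. -/
def comb (m : ℕ) : ℕ → BinTree
  | 0 => BinTree.leaf
  | n + 1 => BinTree.node (comb m n) (rightChain (m - 1))

/-- The condition `i·m ⊴_T i·m−1 ⊴_T ⋯ ⊴_T (i−1)·m+1` for all `1 ≤ i ≤ n`,
stated on consecutive labels. -/
def mCond (m n : ℕ) (T : BinTree) : Prop :=
  ∀ i j, 1 ≤ i → i ≤ n → 1 ≤ j → j < m → T.sub 0 (i * m - j + 1) (i * m - j)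

/-- `Δ(g) = (x·g(x) − g(1)) / (x − 1)`, an exact polynomial division. -/
noncomputable def polyDelta (g : Polynomial ℤ) : Polynomial ℤ :=
  Polynomial.divByMonic (Polynomial.X * g - Polynomial.C (g.eval 1))
    (Polynomial.X - Polynomial.C 1)

/-- `nestedDelta [g₁, …, g_m] = Δ(g₁·Δ(g₂· ⋯ ·Δ(g_m)⋯))`. -/
noncomputable def nestedDelta : List (Polynomial ℤ) → Polynomial ℤ
  | [] => 1
  | g :: gs => polyDelta (g * nestedDelta gs)

/-- Number of nodes on the leftmost branch. -/
def leftDepth : BinTree → ℕ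
  | BinTree.leaf => 0
  | BinTree.node l _ => leftDepth l + 1

namespace Stmt18Aux
open BinTree

/-! ### left-spine list representation -/

def toL : BinTree → List BinTree
  | .leaf => []
  | .node l r => r :: toL l

def fromL : List BinTree → BinTree
  | [] => .leaf
  | r :: xs => .node (fromL xs) r

def subAt : BinTree → ℕ → BinTree
  | T, 0 => T
  | .leaf, _+1 => .leaf
  | .node l _, i+1 => subAt l i

def insL : ℕ → BinTree → BinTree → BinTree
  | 0, L, R => .node L R
  | _+1, L, .leaf => .node L .leaf
  | i+1, L, .node A C => .node (insL i L A) C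

@[simp] lemma toL_leaf : toL .leaf = [] := rfl
@[simp] lemma toL_node (l r : BinTree) : toL (.node l r) = r :: toL l := rfl

lemma fromL_toL (T : BinTree) : fromL (toL T) = T := by
  induction T with
  | leaf => rfl
  | node l r ih => simp [toL, fromL, ih]

lemma toL_fromL (xs : List BinTree) : toL (fromL xs) = xs := by
  induction xs with
  | nil => rfl
  | cons r xs ih => simp [toL, fromL, ih]

lemma toL_inj {T U : BinTree} (h : toL T = toL U) : T = U := by
  rw [← fromL_toL T, h, fromL_toL]

lemma leftDepth_eq (T : BinTree) : leftDepth T = (toL T).length := by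
  induction T with
  | leaf => rfl
  | node l r ih => simp [leftDepth, toL, ih]

lemma toL_graftL (S B : BinTree) : toL (graftL S B) = toL S ++ toL B := by
  induction S with
  | leaf => simp [graftL]
  | node l r ih => simp [graftL, toL, ih]

lemma size_graftL (S B : BinTree) : (graftL S B).size = S.size + B.size := by
  induction S with
  | leaf => simp [graftL, size]
  | node l r ih => simp [graftL, size, ih]; ring

lemma toL_subAt (T : BinTree) (k : ℕ) : toL (subAt T k) = (toL T).drop k := by
  induction T generalizing k with
  | leaf => cases k <;> simp [subAt]
  | node l r ih =>
    cases k with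
    | zero => simp [subAt]
    | succ k => simp [subAt, ih]

lemma toL_insL {k : ℕ} {R : BinTree} (L : BinTree) (h : k ≤ leftDepth R) :
    toL (insL k L R) = (toL R).take k ++ subAt R k :: toL L := by
  induction k generalizing R with
  | zero => simp [insL, subAt]
  | succ k ih =>
    cases R with
    | leaf => simp [leftDepth] at h
    | node A C =>
      have hk : k ≤ leftDepth A := by
        simpa [leftDepth] using Nat.succ_le_succ_iff.mp h
      simp [insL, toL, subAt, ih hk]

lemma leftDepth_insL {k : ℕ} {R : BinTree} (L : BinTree) (h : k ≤ leftDepth R) :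
    leftDepth (insL k L R) = leftDepth L + 1 + k := by
  have h2 : k ≤ (toL R).length := by rw [← leftDepth_eq]; exact h
  rw [leftDepth_eq, toL_insL L h]
  simp [List.length_take, Nat.min_eq_left h2, ← leftDepth_eq]
  omega

lemma size_insL {k : ℕ} {R : BinTree} (L : BinTree) (h : k ≤ leftDepth R) :
    (insL k L R).size = L.size + R.size + 1 := by
  induction k generalizing R with
  | zero => simp [insL, size]
  | succ k ih =>
    cases R with
    | leaf => simp [leftDepth] at h
    | node A C =>
      have hk : k ≤ leftDepth A := by
        simpa [leftDepth] using Nat.succ_le_succ_iff.mp h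
      simp [insL, size, ih hk]; ring

lemma size_eq_zero {T : BinTree} (h : T.size = 0) : T = .leaf := by
  cases T with
  | leaf => rfl
  | node l r => simp [size] at h

/-! ### rotations -/

lemma rot_size {T U : BinTree} (h : Rot T U) : T.size = U.size := by
  induction h with
  | base A B C => simp [size]; ring
  | left r _ ih => simp [size, ih]
  | right l _ ih => simp [size, ih]

lemma tam_size {T U : BinTree} (h : tamariLE T U) : T.size = U.size := by
  induction h with
  | refl => rfl
  | tail _ h ih => rw [ih, rot_size h]

lemma tam_leaf {T : BinTree} (h : tamariLE T .leaf) : T = .leaf :=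
  size_eq_zero (by simpa [size] using tam_size h)

lemma tam_node_congr {l' l r' r : BinTree} (hl : tamariLE l' l) (hr : tamariLE r' r) :
    tamariLE (.node l' r') (.node l r) := by
  have h1 : tamariLE (BinTree.node l' r') (.node l r') :=
    Relation.ReflTransGen.lift (fun x => BinTree.node x r') (fun _ _ h => Rot.left r' h) _ _ hl
  have h2 : tamariLE (BinTree.node l r') (.node l r) :=
    Relation.ReflTransGen.lift (fun x => BinTree.node l x) (fun _ _ h => Rot.right l h) _ _ hr
  exact h1.trans h2

lemma rot_graft_left {S' S : BinTree} (B : BinTree) (h : Rot S' S) :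
    Rot (graftL S' B) (graftL S B) := by
  induction h with
  | base A B₀ C =>
    cases A with
    | leaf => simpa [graftL] using Rot.base B B₀ C
    | node a b => simpa [graftL] using Rot.base (graftL (BinTree.node a b) B) B₀ C
  | left r _ ih => exact Rot.left r ih
  | right l _ ih =>
    cases l with
    | leaf => exact Rot.right _ (by assumption)
    | node a b => exact Rot.right _ (by assumption)

lemma rot_graft_right {B' B : BinTree} (S : BinTree) (h : Rot B' B) :
    Rot (graftL S B') (graftL S B) := by
  induction S with
  | leaf => simpa [graftL]
  | node l r ih => exact Rot.left r ih

lemma tam_graft_congr {S' S B' B : BinTree} (hs : tamariLE S' S) (hb : tamariLE B' B) :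
    tamariLE (graftL S' B') (graftL S B) := by
  have h1 : tamariLE (graftL S' B') (graftL S B') :=
    Relation.ReflTransGen.lift (fun x => graftL x B') (fun _ _ h => rot_graft_left B' h) _ _ hs
  have h2 : tamariLE (graftL S B') (graftL S B) :=
    Relation.ReflTransGen.lift (fun x => graftL S x) (fun _ _ h => rot_graft_right S h) _ _ hb
  exact h1.trans h2

end Stmt18Aux
namespace Stmt18Aux
open BinTree

/-! ### one-step factorisations and decompositions -/

lemma rot_graft_split {S : BinTree} : ∀ {W B : BinTree}, Rot W (graftL S B) →
    (∃ S', Rot S' S ∧ W = graftL S' B) ∨ (∃ B', Rot B' B ∧ W = graftL S B') := by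
  induction S with
  | leaf =>
    intro W B h
    exact Or.inr ⟨W, by simpa [graftL] using h, by simp [graftL]⟩
  | node l r ih =>
    intro W B h
    rw [graftL] at h
    generalize hgl : graftL l B = gl at h
    cases h with
    | base A B₁ C =>
      left
      refine ⟨.node (.node l B₁) C, Rot.base l B₁ C, ?_⟩
      simp [graftL, hgl]
    | left _ hW =>
      rcases ih (by rwa [hgl]) with ⟨S', hS', rfl⟩ | ⟨B', hB', rfl⟩
      · exact Or.inl ⟨.node S' r, Rot.left r hS', by simp [graftL]⟩
      · exact Or.inr ⟨B', hB', by simp [graftL]⟩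
    | right _ hW =>
      left
      exact ⟨.node l _, Rot.right l hW, by simp [graftL, hgl]⟩

lemma tam_graft_split {W S B : BinTree} (h : tamariLE W (graftL S B)) :
    ∃ S' B', tamariLE S' S ∧ tamariLE B' B ∧ W = graftL S' B' := by
  induction h using Relation.ReflTransGen.head_induction_on with
  | refl => exact ⟨S, B, .refl, .refl, rfl⟩
  | head h' _ ihc =>
    rcases ihc with ⟨S', B', hS, hB, rfl⟩
    rcases rot_graft_split h' with ⟨S'', h2, rfl⟩ | ⟨B'', h2, rfl⟩
    · exact ⟨S'', B', (Relation.ReflTransGen.single h2).trans hS, hB, rfl⟩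
    · exact ⟨S', B'', hS, (Relation.ReflTransGen.single h2).trans hB, rfl⟩

lemma insL_le {L : BinTree} : ∀ {i : ℕ} {R : BinTree}, i ≤ leftDepth R →
    tamariLE (insL i L R) (.node L R) := by
  intro i
  induction i with
  | zero => intro R _; exact .refl
  | succ i ih =>
    intro R h
    cases R with
    | leaf => simp [leftDepth] at h
    | node A C =>
      have hA : i ≤ leftDepth A := by simpa [leftDepth] using Nat.succ_le_succ_iff.mp h
      have h1 : tamariLE (.node (insL i L A) C) (.node (.node L A) C) :=
        tam_node_congr (ih hA) .refl
      have h2 : tamariLE (BinTree.node (.node L A) C) (.node L (.node A C)) :=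
        Relation.ReflTransGen.single (Rot.base L A C)
      exact h1.trans h2

lemma rot_insL_split {L : BinTree} : ∀ {i : ℕ} {W R : BinTree}, i ≤ leftDepth R →
    Rot W (insL i L R) →
    ∃ i' L' R', tamariLE L' L ∧ tamariLE R' R ∧ i' ≤ leftDepth R' ∧ W = insL i' L' R' := by
  intro i
  induction i with
  | zero =>
    intro W R _ h
    rw [insL] at h
    cases h with
    | base A B₁ C =>
      refine ⟨1, L, .node B₁ C, .refl, .refl, by simp [leftDepth], ?_⟩
      simp [insL]
    | left _ hW => exact ⟨0, _, R, Relation.ReflTransGen.single hW, .refl, Nat.zero_le _, rfl⟩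
    | right _ hW => exact ⟨0, L, _, .refl, Relation.ReflTransGen.single hW, Nat.zero_le _, rfl⟩
  | succ i ih =>
    intro W R h hrot
    cases R with
    | leaf => simp [leftDepth] at h
    | node A C =>
      have hA : i ≤ leftDepth A := by simpa [leftDepth] using Nat.succ_le_succ_iff.mp h
      rw [insL] at hrot
      generalize hgl : insL i L A = gl at hrot
      cases hrot with
      | base A₀ B₁ C₁ =>
        refine ⟨i + 2, L, .node (.node A B₁) C₁,
          .refl, Relation.ReflTransGen.single (Rot.base A B₁ C₁), by simp [leftDepth]; omega, ?_⟩
        simp [insL, hgl]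
      | left _ hW =>
        rcases ih hA (by rwa [hgl]) with ⟨i', L', A', hL, hA', hi', rfl⟩
        refine ⟨i' + 1, L', .node A' C, hL, tam_node_congr hA' .refl,
          by simp [leftDepth]; omega, by simp [insL]⟩
      | right _ hW =>
        refine ⟨i + 1, L, .node A _, .refl, tam_node_congr .refl (Relation.ReflTransGen.single hW),
          by simp [leftDepth]; omega, by simp [insL, hgl]⟩

lemma tam_node_split {W L R : BinTree} (h : tamariLE W (.node L R)) :
    ∃ i L₀ R₀, tamariLE L₀ L ∧ tamariLE R₀ R ∧ i ≤ leftDepth R₀ ∧ W = insL i L₀ R₀ := by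
  induction h using Relation.ReflTransGen.head_induction_on with
  | refl => exact ⟨0, L, R, .refl, .refl, Nat.zero_le _, by simp [insL]⟩
  | head h' _ ihc =>
    rcases ihc with ⟨i, L₀, R₀, hL, hR, hi, rfl⟩
    rcases rot_insL_split hi h' with ⟨i', L', R', hL', hR', hi', rfl⟩
    exact ⟨i', L', R', hL'.trans hL, hR'.trans hR, hi', rfl⟩

lemma tam_node_build {W L R L₀ R₀ : BinTree} {i : ℕ} (hL : tamariLE L₀ L)
    (hR : tamariLE R₀ R) (hi : i ≤ leftDepth R₀) (hW : W = insL i L₀ R₀) :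
    tamariLE W (.node L R) := by
  subst hW
  exact (insL_le hi).trans (tam_node_congr hL hR)

lemma insL_inj : ∀ {i i' : ℕ} {L L' R R' : BinTree}, i ≤ leftDepth R → i' ≤ leftDepth R' →
    L.size = L'.size → insL i L R = insL i' L' R' → i = i' ∧ L = L' ∧ R = R' := by
  intro i
  induction i with
  | zero =>
    intro i' L L' R R' _ hi' hs heq
    cases i' with
    | zero =>
      rw [insL, insL] at heq
      injection heq with h1 h2
      exact ⟨rfl, h1, h2⟩
    | succ j =>
      exfalso
      cases R' with
      | leaf => simp [leftDepth] at hi'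
      | node A C =>
        have hA : j ≤ leftDepth A := by simpa [leftDepth] using Nat.succ_le_succ_iff.mp hi'
        rw [insL, insL] at heq
        injection heq with h1 h2
        have := size_insL L' hA
        rw [← h1] at this
        omega
  | succ j ih =>
    intro i' L L' R R' hi hi' hs heq
    cases R with
    | leaf => simp [leftDepth] at hi
    | node A C =>
      have hA : j ≤ leftDepth A := by simpa [leftDepth] using Nat.succ_le_succ_iff.mp hi
      cases i' with
      | zero =>
        exfalso
        rw [insL, insL] at heq
        injection heq with h1 h2
        have := size_insL L hA
        rw [h1] at this
        omega
      | succ j' =>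
        cases R' with
        | leaf => simp [leftDepth] at hi'
        | node A' C' =>
          have hA' : j' ≤ leftDepth A' := by simpa [leftDepth] using Nat.succ_le_succ_iff.mp hi'
          rw [insL, insL] at heq
          injection heq with h1 h2
          obtain ⟨e1, e2, e3⟩ := ih hA hA' hs h1
          exact ⟨by omega, e2, by rw [e3, h2]⟩

lemma graft_inj : ∀ {S S' B B' : BinTree}, S.size = S'.size →
    graftL S B = graftL S' B' → S = S' ∧ B = B' := by
  intro S
  induction S with
  | leaf =>
    intro S' B B' hs heq
    cases S' with
    | leaf => exact ⟨rfl, by simpa [graftL] using heq⟩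
    | node l' r' => simp [size] at hs
  | node l r ih =>
    intro S' B B' hs heq
    cases S' with
    | leaf => simp [size] at hs
    | node l' r' =>
      rw [graftL, graftL] at heq
      injection heq with h1 h2
      subst h2
      have hls : l.size = l'.size := by
        simp [size] at hs
        omega
      obtain ⟨e1, e2⟩ := ih hls h1
      exact ⟨by rw [e1], e2⟩

end Stmt18Aux
namespace Stmt18Aux
open BinTree

/-! ### m-binary trees and right-part membership -/

lemma list_snoc_inj {α : Type*} {as bs : List α} {a b : α} (h : as ++ [a] = bs ++ [b]) :
    as = bs ∧ a = b := by
  have h' := congrArg List.reverse h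
  simp at h'
  obtain ⟨h1, h2⟩ := h'
  exact ⟨by simpa using congrArg List.reverse h2, h1⟩

lemma graftL_leaf (S : BinTree) : graftL S .leaf = S := by
  induction S with
  | leaf => rfl
  | node l r ih => simp [graftL, ih]

lemma buildRight_single (S : BinTree) : buildRight [S] = S := by
  simp [buildRight, buildAux, graftL_leaf]

lemma buildRight_cons (S a : BinTree) (r : List BinTree) :
    buildRight (S :: a :: r) = graftL S (.node .leaf (buildRight (a :: r))) := rfl

def isBR (m t : ℕ) (X : BinTree) : Prop :=
  ∃ l : List BinTree, l.length = t ∧ (∀ S ∈ l, IsMBinary m S) ∧ X = buildRight l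

lemma isBR_one {m : ℕ} {X : BinTree} : isBR m 1 X ↔ IsMBinary m X := by
  constructor
  · rintro ⟨l, hlen, hl, rfl⟩
    cases l with
    | nil => simp at hlen
    | cons S r =>
      cases r with
      | nil => rw [buildRight_single]; exact hl S (by simp)
      | cons b s => simp at hlen
  · intro h
    exact ⟨[X], rfl, by simpa using h, (buildRight_single X).symm⟩

lemma mbin_iff {m : ℕ} {T : BinTree} : IsMBinary m T ↔ ∀ r ∈ toL T, isBR m m r := by
  constructor
  · intro h
    induction h with
    | leaf => simp
    | node TL TRs hlen hTL hTRs ih =>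
      intro r hr
      rw [toL_node] at hr
      rcases List.mem_cons.mp hr with rfl | hmem
      · exact ⟨TRs, hlen, hTRs, rfl⟩
      · exact ih r hmem
  · intro h
    induction T with
    | leaf => exact IsMBinary.leaf
    | node l r ih =>
      obtain ⟨lst, hlen, hlst, rfl⟩ := h r (by simp)
      exact IsMBinary.node l lst hlen (ih fun x hx => h x (by simp [hx])) hlst

lemma isBR_succ {m t : ℕ} (ht : 1 ≤ t) {X : BinTree} :
    isBR m (t + 1) X ↔
      ∃ ys r, toL X = ys ++ [r] ∧ (∀ y ∈ ys, isBR m m y) ∧ isBR m t r := by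
  constructor
  · rintro ⟨l, hlen, hl, rfl⟩
    obtain ⟨S, a, rest, rfl⟩ : ∃ S a rest, l = S :: a :: rest := by
      cases l with
      | nil => simp at hlen
      | cons S r =>
        cases r with
        | nil => simp at hlen; omega
        | cons a rest => exact ⟨S, a, rest, rfl⟩
    · refine ⟨toL S, buildRight (a :: rest), ?_, ?_, ?_⟩
      · rw [buildRight_cons, toL_graftL]; rfl
      · exact mbin_iff.mp (hl S (by simp))
      · exact ⟨a :: rest, by simpa using hlen, fun x hx => hl x (by simp [hx]), rfl⟩
  · rintro ⟨ys, r, hX, hys, l, hlen, hl, rfl⟩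
    obtain ⟨a, rest, rfl⟩ : ∃ a rest, l = a :: rest := by
      cases l with
      | nil => simp at hlen; omega
      | cons a rest => exact ⟨a, rest, rfl⟩
    · refine ⟨fromL ys :: a :: rest, by simpa using hlen, ?_, ?_⟩
      · intro x hx
        rcases List.mem_cons.mp hx with rfl | hx
        · exact mbin_iff.mpr (by rw [toL_fromL]; exact hys)
        · exact hl x hx
      · apply toL_inj
        rw [hX, buildRight_cons, toL_graftL, toL_fromL]
        rfl

lemma isBR_ne_leaf {m t : ℕ} (ht : 2 ≤ t) {X : BinTree} (h : isBR m t X) : X ≠ .leaf := by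
  obtain ⟨t', rfl⟩ : ∃ t', t = t' + 1 := ⟨t - 1, by omega⟩
  obtain ⟨ys, r, hX, -, -⟩ := (isBR_succ (by omega)).mp h
  intro hle
  rw [hle] at hX
  simp at hX

/-- `cc t` : 1 if `t ≥ 2`, else 0. -/
def cc (t : ℕ) : ℕ := if 2 ≤ t then 1 else 0

lemma vcond_iff {m : ℕ} (t : ℕ) (ht : 1 ≤ t) {k : ℕ} {Y : BinTree} (hk : k ≤ leftDepth Y) :
    ((∀ y ∈ (toL Y).take k, isBR m m y) ∧ isBR m t (subAt Y k)) ↔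
      (isBR m t Y ∧ k + cc t ≤ leftDepth Y) := by
  have hkl : k ≤ (toL Y).length := by rwa [← leftDepth_eq]
  rcases Nat.lt_or_ge t 2 with ht2 | ht2
  · have ht1 : t = 1 := by omega
    subst ht1
    simp only [cc, if_neg (by omega : ¬ (2:ℕ) ≤ 1), Nat.add_zero]
    rw [isBR_one, isBR_one, mbin_iff, mbin_iff, toL_subAt]
    constructor
    · rintro ⟨h1, h2⟩
      refine ⟨fun y hy => ?_, hk⟩
      rw [← List.take_append_drop k (toL Y)] at hy
      rcases List.mem_append.mp hy with hy | hy
      · exact h1 y hy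
      · exact h2 y hy
    · rintro ⟨h1, _⟩
      exact ⟨fun y hy => h1 y (List.take_subset _ _ hy),
        fun y hy => h1 y (List.drop_subset _ _ hy)⟩
  · obtain ⟨t', rfl⟩ : ∃ t', t = t' + 1 := ⟨t - 1, by omega⟩
    have ht' : 1 ≤ t' := by omega
    simp only [cc, if_pos ht2]
    rw [isBR_succ ht', isBR_succ ht']
    constructor
    · rintro ⟨h1, ys, r, hsub, hys, hr⟩
      rw [toL_subAt] at hsub
      have hY : toL Y = ((toL Y).take k ++ ys) ++ [r] := by
        rw [List.append_assoc, ← hsub, List.take_append_drop]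
      refine ⟨⟨_, r, hY, fun y hy => ?_, hr⟩, ?_⟩
      · rcases List.mem_append.mp hy with hy | hy
        · exact h1 y hy
        · exact hys y hy
      · rw [leftDepth_eq, hY]
        simp [List.length_take]
        omega
    · rintro ⟨⟨ys, r, hY, hys, hr⟩, hd⟩
      have hlen : k ≤ ys.length := by
        rw [leftDepth_eq, hY] at hd
        simp at hd
        omega
      have htake : (toL Y).take k = ys.take k := by
        rw [hY, List.take_append_of_le_length hlen]
      have hdrop : (toL Y).drop k = ys.drop k ++ [r] := by
        rw [hY, List.drop_append_of_le_length hlen]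
      refine ⟨fun y hy => hys y (by rw [htake] at hy; exact List.take_subset _ _ hy), ?_⟩
      exact ⟨ys.drop k, r, by rw [toL_subAt, hdrop],
        fun y hy => hys y (List.drop_subset _ _ hy), hr⟩

lemma mbin_insL {m k : ℕ} {L R : BinTree} (hk : k ≤ leftDepth R) :
    IsMBinary m (insL k L R) ↔
      IsMBinary m L ∧ (∀ y ∈ (toL R).take k, isBR m m y) ∧ isBR m m (subAt R k) := by
  rw [mbin_iff, toL_insL L hk]
  constructor
  · intro h
    refine ⟨mbin_iff.mpr fun y hy => h y (by simp [hy]), fun y hy => h y (by simp [hy]), ?_⟩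
    exact h _ (by simp)
  · rintro ⟨h1, h2, h3⟩
    intro y hy
    rcases List.mem_append.mp hy with hy | hy
    · exact h2 y hy
    · rcases List.mem_cons.mp hy with rfl | hy
      · exact h3
      · exact mbin_iff.mp h1 y hy

lemma isBR_graft_insL {m t k : ℕ} (ht : 1 ≤ t) {S' Y : BinTree} (hk : k ≤ leftDepth Y) :
    isBR m (t + 1) (graftL S' (insL k .leaf Y)) ↔
      IsMBinary m S' ∧ (∀ y ∈ (toL Y).take k, isBR m m y) ∧ isBR m t (subAt Y k) := by
  have htl : toL (graftL S' (insL k .leaf Y)) =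
      (toL S' ++ (toL Y).take k) ++ [subAt Y k] := by
    rw [toL_graftL, toL_insL _ hk]
    simp
  rw [isBR_succ ht]
  constructor
  · rintro ⟨ys, r, hX, hys, hr⟩
    rw [htl] at hX
    obtain ⟨h1, h2⟩ := list_snoc_inj hX.symm
    subst h2
    refine ⟨mbin_iff.mpr fun y hy => hys y (by rw [h1]; simp [hy]), fun y hy => hys y ?_, hr⟩
    rw [h1]; simp [hy]
  · rintro ⟨h1, h2, h3⟩
    refine ⟨toL S' ++ (toL Y).take k, subAt Y k, htl, fun y hy => ?_, h3⟩
    rcases List.mem_append.mp hy with hy | hy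
    · exact mbin_iff.mp h1 y hy
    · exact h2 y hy

lemma buildRight_inj : ∀ {l l' : List BinTree}, l.length = l'.length →
    buildRight l = buildRight l' → l = l' := by
  intro l
  induction l with
  | nil =>
    intro l' hlen _
    cases l' with
    | nil => rfl
    | cons a r => simp at hlen
  | cons a r ih =>
    intro l' hlen heq
    cases l' with
    | nil => simp at hlen
    | cons a' r' =>
      cases r with
      | nil =>
        cases r' with
        | nil => rw [buildRight_single, buildRight_single] at heq; rw [heq]
        | cons b' s' => simp at hlen
      | cons b s =>
        cases r' with
        | nil => simp at hlen
        | cons b' s' =>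
          rw [buildRight_cons, buildRight_cons] at heq
          have heq2 : toL a ++ [buildRight (b :: s)] = toL a' ++ [buildRight (b' :: s')] := by
            have := congrArg toL heq
            rwa [toL_graftL, toL_graftL, toL_node, toL_leaf, toL_node, toL_leaf] at this
          obtain ⟨h1, h2⟩ := list_snoc_inj heq2
          have : (b :: s) = (b' :: s') := ih (by simpa using hlen) h2
          rw [toL_inj h1, this]

lemma size_buildAux_mem : ∀ {l : List BinTree} {S : BinTree}, S ∈ l →
    S.size ≤ (buildAux l).size := by
  intro l
  induction l with
  | nil => intro S h; simp at h
  | cons a r ih =>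
    intro S h
    rcases List.mem_cons.mp h with rfl | h
    · simp [buildAux, size, size_graftL]; omega
    · have := ih h
      simp [buildAux, size, size_graftL]
      omega

lemma size_buildRight_mem {l : List BinTree} {S : BinTree} (h : S ∈ l) :
    S.size ≤ (buildRight l).size := by
  cases l with
  | nil => simp at h
  | cons a r =>
    rcases List.mem_cons.mp h with rfl | h
    · simp [buildRight, size_graftL]
    · calc S.size ≤ (buildAux r).size := size_buildAux_mem h
        _ ≤ _ := by simp [buildRight, size_graftL]

end Stmt18Aux
namespace Stmt18Aux
open BinTree Polynomial

/-! ### finiteness and the counting polynomial -/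

lemma finite_size_le : ∀ n : ℕ, {T : BinTree | T.size ≤ n}.Finite := by
  intro n
  induction n with
  | zero =>
    apply Set.Finite.subset (Set.finite_singleton BinTree.leaf)
    intro T hT
    simp only [Set.mem_setOf_eq, Nat.le_zero] at hT
    simp [size_eq_zero hT]
  | succ n ih =>
    apply Set.Finite.subset (((ih.prod ih).image
      (fun p : BinTree × BinTree => BinTree.node p.1 p.2)).insert BinTree.leaf)
    intro T hT
    cases T with
    | leaf => simp
    | node l r =>
      simp only [Set.mem_setOf_eq, size] at hT
      refine Set.mem_insert_of_mem _ ⟨(l, r), ⟨?_, ?_⟩, rfl⟩ <;>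
        simp only [Set.mem_setOf_eq] <;> omega

lemma finite_below (T : BinTree) {Q : BinTree → Prop} :
    {T' : BinTree | Q T' ∧ tamariLE T' T}.Finite := by
  apply Set.Finite.subset (finite_size_le T.size)
  rintro T' ⟨-, h⟩
  simp [tam_size h]

noncomputable def DM (m : ℕ) (T : BinTree) : Finset BinTree :=
  (finite_below T (Q := IsMBinary m)).toFinset

lemma mem_DM {m : ℕ} {T T' : BinTree} :
    T' ∈ DM m T ↔ IsMBinary m T' ∧ tamariLE T' T := by
  simp [DM]

noncomputable def DR (m : ℕ) (l : List BinTree) : Finset BinTree :=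
  (Set.Finite.subset (finite_size_le (buildRight l).size)
    (by rintro R₀ ⟨h1, -⟩; simp [tam_size h1]) :
    {R₀ : BinTree | tamariLE R₀ (buildRight l) ∧ isBR m l.length R₀}.Finite).toFinset

lemma mem_DR {m : ℕ} {l : List BinTree} {R₀ : BinTree} :
    R₀ ∈ DR m l ↔ tamariLE R₀ (buildRight l) ∧ isBR m l.length R₀ := by
  simp [DR]

noncomputable def P (m : ℕ) (T : BinTree) : Polynomial ℤ :=
  ∑ T' ∈ DM m T, (X : Polynomial ℤ) ^ leftDepth T'

lemma leftDepth_pos {T : BinTree} (h : T ≠ .leaf) : 1 ≤ leftDepth T := by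
  cases T with
  | leaf => exact absurd rfl h
  | node l r => simp [leftDepth]

lemma leftDepth_graftL (S B : BinTree) :
    leftDepth (graftL S B) = leftDepth S + leftDepth B := by
  simp [leftDepth_eq, toL_graftL]

/-! ### polyDelta computations -/

lemma polyDelta_sum_pow {ι : Type*} (F : Finset ι) (f : ι → ℕ) :
    polyDelta (∑ u ∈ F, (X : Polynomial ℤ) ^ f u) =
      ∑ u ∈ F, ∑ k ∈ Finset.range (f u + 1), (X : Polynomial ℤ) ^ k := by
  have key : (X : Polynomial ℤ) * (∑ u ∈ F, (X : Polynomial ℤ) ^ f u) -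
      C ((∑ u ∈ F, (X : Polynomial ℤ) ^ f u).eval 1) =
      (X - C 1) * ∑ u ∈ F, ∑ k ∈ Finset.range (f u + 1), (X : Polynomial ℤ) ^ k := by
    rw [Finset.mul_sum, Finset.mul_sum]
    have hgeo : ∀ u : ι, (X - C (1:ℤ)) * ∑ k ∈ Finset.range (f u + 1), (X : Polynomial ℤ) ^ k
        = X ^ (f u + 1) - 1 := by
      intro u
      rw [mul_comm]
      simpa using geom_sum_mul (X : Polynomial ℤ) (f u + 1)
    simp only [hgeo]
    rw [Finset.sum_sub_distrib]
    congr 1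
    · exact Finset.sum_congr rfl fun u _ => by rw [pow_succ, mul_comm]
    · rw [eval_finset_sum]
      simp [map_sum]
  rw [polyDelta, key, mul_divByMonic_cancel_left _ (monic_X_sub_C 1)]

end Stmt18Aux
namespace Stmt18Aux
open BinTree Polynomial

lemma DR_single (m : ℕ) (S : BinTree) : DR m [S] = DM m S := by
  ext R₀
  rw [mem_DR, mem_DM, buildRight_single]
  simp only [List.length_singleton, isBR_one]
  exact and_comm

lemma gen (m : ℕ) (hm : 1 ≤ m) :
    ∀ (rest : List BinTree) (S : BinTree), IsMBinary m S → (∀ x ∈ rest, IsMBinary m x) →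
    P m S * nestedDelta (rest.map (P m)) =
      ∑ R₀ ∈ DR m (S :: rest),
        (X : Polynomial ℤ) ^ (leftDepth R₀ - cc (rest.length + 1)) := by
  intro rest
  induction rest with
  | nil =>
    intro S hS _
    rw [List.map_nil]
    show P m S * 1 = _
    rw [mul_one, DR_single, P]
    exact Finset.sum_congr rfl fun T' _ => by simp [cc]
  | cons S₂ rest₂ ih =>
    intro S hS hall
    have hS₂ : IsMBinary m S₂ := hall S₂ (by simp)
    have hrest₂ : ∀ x ∈ rest₂, IsMBinary m x := fun x hx => hall x (by simp [hx])
    set c' := cc (rest₂.length + 1) with hc'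
    -- auxiliary: bound transfer for members of DR m (S₂ :: rest₂)
    have hbound : ∀ {Y₀ : BinTree}, isBR m (rest₂.length + 1) Y₀ →
        ∀ {k : ℕ}, k ≤ leftDepth Y₀ - c' → k + c' ≤ leftDepth Y₀ ∧ k ≤ leftDepth Y₀ := by
      intro Y₀ hY k hk
      rcases Nat.eq_zero_or_pos rest₂.length with h0 | h0
      · have : c' = 0 := by simp [hc', cc, h0]
        omega
      · have hcc1 : c' = 1 := by rw [hc']; unfold cc; rw [if_pos (by omega)]
        have := leftDepth_pos (isBR_ne_leaf (by omega) hY)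
        omega
    have step1 : P m S * nestedDelta ((S₂ :: rest₂).map (P m)) =
        ∑ x ∈ ((DM m S).sigma fun _ => (DR m (S₂ :: rest₂)).sigma fun Y₀ =>
            Finset.range (leftDepth Y₀ - c' + 1)),
          (X : Polynomial ℤ) ^ (leftDepth x.1 + x.2.2) := by
      rw [List.map_cons]
      rw [show nestedDelta (P m S₂ :: rest₂.map (P m)) =
        polyDelta (P m S₂ * nestedDelta (rest₂.map (P m))) from rfl]
      rw [ih S₂ hS₂ hrest₂, polyDelta_sum_pow, P, Finset.sum_mul, Finset.sum_sigma]
      apply Finset.sum_congr rfl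
      intro S' _
      rw [Finset.mul_sum, Finset.sum_sigma]
      apply Finset.sum_congr rfl
      intro Y₀ _
      rw [Finset.mul_sum]
      exact Finset.sum_congr rfl fun k _ => by rw [pow_add]
    rw [step1]
    have hcc2 : cc ((S₂ :: rest₂).length + 1) = 1 := by
      simp [cc]
    rw [hcc2]
    refine Finset.sum_bij (fun x _ => graftL x.1 (insL x.2.2 .leaf x.2.1)) ?_ ?_ ?_ ?_
    · -- maps into DR
      rintro ⟨S', Y₀, k⟩ hx
      rw [Finset.mem_sigma, Finset.mem_sigma] at hx
      dsimp only at hx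
      obtain ⟨hS', hY₀, hk⟩ := hx
      rw [mem_DM] at hS'
      rw [mem_DR, List.length_cons] at hY₀
      rw [Finset.mem_range] at hk
      obtain ⟨hb1, hb2⟩ := hbound hY₀.2 (by omega : k ≤ leftDepth Y₀ - c')
      dsimp only
      rw [mem_DR, List.length_cons, List.length_cons]
      constructor
      · rw [buildRight_cons]
        exact tam_graft_congr hS'.2 (tam_node_build .refl hY₀.1 hb2 rfl)
      · rw [isBR_graft_insL (by omega) hb2]
        exact ⟨hS'.1, (vcond_iff (rest₂.length + 1) (by omega) hb2).mpr ⟨hY₀.2, hb1⟩⟩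
    · -- injective
      rintro ⟨S₁', Y₁, k₁⟩ h₁ ⟨S₂', Y₂, k₂⟩ h₂ heq
      rw [Finset.mem_sigma, Finset.mem_sigma] at h₁ h₂
      dsimp only at h₁ h₂ heq ⊢
      obtain ⟨hS₁', hY₁, hk₁⟩ := h₁
      obtain ⟨hS₂', hY₂, hk₂⟩ := h₂
      rw [mem_DM] at hS₁' hS₂'
      rw [mem_DR, List.length_cons] at hY₁ hY₂
      rw [Finset.mem_range] at hk₁ hk₂
      obtain ⟨-, hb₁⟩ := hbound hY₁.2 (by omega : k₁ ≤ leftDepth Y₁ - c')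
      obtain ⟨-, hb₂⟩ := hbound hY₂.2 (by omega : k₂ ≤ leftDepth Y₂ - c')
      have hsz : S₁'.size = S₂'.size := by
        rw [tam_size hS₁'.2, tam_size hS₂'.2]
      obtain ⟨e1, e2⟩ := graft_inj hsz heq
      have hd₁ : k₁ ≤ leftDepth Y₁ := hb₁
      have hd₂ : k₂ ≤ leftDepth Y₂ := hb₂
      obtain ⟨e3, -, e5⟩ := insL_inj hd₁ hd₂ rfl e2
      subst e1; subst e5; subst e3
      rfl
    · -- surjective
      intro b hb
      rw [mem_DR, List.length_cons, List.length_cons] at hb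
      obtain ⟨hb1, hb2⟩ := hb
      rw [buildRight_cons] at hb1
      obtain ⟨S', B', hS', hB', rfl⟩ := tam_graft_split hb1
      obtain ⟨k, L₀, Y₀, hL₀, hY₀, hk, rfl⟩ := tam_node_split hB'
      have hL₀' : L₀ = .leaf := tam_leaf hL₀
      subst hL₀'
      obtain ⟨hmb, htake, hsub⟩ := (isBR_graft_insL (by omega) hk).mp hb2
      obtain ⟨hbr, hkd⟩ := (vcond_iff (rest₂.length + 1) (by omega) hk).mp ⟨htake, hsub⟩
      refine ⟨⟨S', Y₀, k⟩, ?_, rfl⟩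
      rw [Finset.mem_sigma, Finset.mem_sigma]
      refine ⟨mem_DM.mpr ⟨hmb, hS'⟩, mem_DR.mpr ⟨hY₀, by rwa [List.length_cons]⟩, ?_⟩
      dsimp only
      rw [Finset.mem_range]
      omega
    · -- values
      rintro ⟨S', Y₀, k⟩ hx
      rw [Finset.mem_sigma, Finset.mem_sigma] at hx
      dsimp only at hx ⊢
      obtain ⟨hS', hY₀, hk⟩ := hx
      rw [mem_DR, List.length_cons] at hY₀
      rw [Finset.mem_range] at hk
      obtain ⟨-, hb2⟩ := hbound hY₀.2 (by omega : k ≤ leftDepth Y₀ - c')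
      congr 1
      rw [leftDepth_graftL, leftDepth_insL _ hb2]
      simp [leftDepth]
      omega
end Stmt18Aux
namespace Stmt18Aux
open BinTree Polynomial

lemma main_eq (m : ℕ) (hm : 1 ≤ m) (TL : BinTree) (TRs : List BinTree)
    (hlen : TRs.length = m) (hTL : IsMBinary m TL) (hTRs : ∀ x ∈ TRs, IsMBinary m x) :
    P m (.node TL (buildRight TRs)) = X * P m TL * nestedDelta (TRs.map (P m)) := by
  obtain ⟨S, rest, rfl⟩ : ∃ S rest, TRs = S :: rest := by
    cases TRs with
    | nil => rw [List.length_nil] at hlen; omega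
    | cons S rest => exact ⟨S, rest, rfl⟩
  have hm' : rest.length + 1 = m := by simpa using hlen
  have hS : IsMBinary m S := hTRs S (by simp)
  have hrest : ∀ x ∈ rest, IsMBinary m x := fun x hx => hTRs x (by simp [hx])
  have hbound : ∀ {R₀ : BinTree}, isBR m m R₀ →
      ∀ {k : ℕ}, k ≤ leftDepth R₀ - cc m → k + cc m ≤ leftDepth R₀ ∧ k ≤ leftDepth R₀ := by
    intro R₀ hR k hk
    rcases Nat.lt_or_ge m 2 with h0 | h0
    · have : cc m = 0 := by unfold cc; rw [if_neg (by omega)]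
      omega
    · have hcc1 : cc m = 1 := by unfold cc; rw [if_pos h0]
      have := leftDepth_pos (isBR_ne_leaf h0 hR)
      omega
  have step1 : X * P m TL * nestedDelta ((S :: rest).map (P m)) =
      ∑ x ∈ ((DM m TL).sigma fun _ => (DR m (S :: rest)).sigma fun R₀ =>
          Finset.range (leftDepth R₀ - cc m + 1)),
        (X : Polynomial ℤ) ^ (leftDepth x.1 + 1 + x.2.2) := by
    rw [List.map_cons]
    rw [show nestedDelta (P m S :: rest.map (P m)) =
      polyDelta (P m S * nestedDelta (rest.map (P m))) from rfl]
    rw [gen m hm rest S hS hrest, hm', polyDelta_sum_pow, mul_assoc]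
    rw [P, Finset.sum_mul, Finset.mul_sum, Finset.sum_sigma]
    apply Finset.sum_congr rfl
    intro L₀ _
    rw [Finset.mul_sum, Finset.mul_sum, Finset.sum_sigma]
    apply Finset.sum_congr rfl
    intro R₀ _
    rw [Finset.mul_sum, Finset.mul_sum]
    apply Finset.sum_congr rfl
    intro k _
    ring
  rw [step1, P]
  refine (Finset.sum_bij (fun x _ => insL x.2.2 x.1 x.2.1) ?_ ?_ ?_ ?_).symm
  · -- maps into DM
    rintro ⟨L₀, R₀, k⟩ hx
    rw [Finset.mem_sigma, Finset.mem_sigma] at hx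
    dsimp only at hx
    obtain ⟨hL₀, hR₀, hk⟩ := hx
    rw [mem_DM] at hL₀
    rw [mem_DR, List.length_cons, hm'] at hR₀
    rw [Finset.mem_range] at hk
    obtain ⟨hb1, hb2⟩ := hbound hR₀.2 (by omega : k ≤ leftDepth R₀ - cc m)
    dsimp only
    rw [mem_DM]
    constructor
    · rw [mbin_insL hb2]
      obtain ⟨hv1, hv2⟩ := (vcond_iff m hm hb2).mpr ⟨hR₀.2, hb1⟩
      exact ⟨hL₀.1, hv1, hv2⟩
    · exact tam_node_build hL₀.2 hR₀.1 hb2 rfl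
  · -- injective
    rintro ⟨L₁, R₁, k₁⟩ h₁ ⟨L₂, R₂, k₂⟩ h₂ heq
    rw [Finset.mem_sigma, Finset.mem_sigma] at h₁ h₂
    dsimp only at h₁ h₂ heq ⊢
    obtain ⟨hL₁, hR₁, hk₁⟩ := h₁
    obtain ⟨hL₂, hR₂, hk₂⟩ := h₂
    rw [mem_DM] at hL₁ hL₂
    rw [mem_DR, List.length_cons, hm'] at hR₁ hR₂
    rw [Finset.mem_range] at hk₁ hk₂
    obtain ⟨-, hb₁⟩ := hbound hR₁.2 (by omega : k₁ ≤ leftDepth R₁ - cc m)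
    obtain ⟨-, hb₂⟩ := hbound hR₂.2 (by omega : k₂ ≤ leftDepth R₂ - cc m)
    have hsz : L₁.size = L₂.size := by rw [tam_size hL₁.2, tam_size hL₂.2]
    obtain ⟨e1, e2, e3⟩ := insL_inj hb₁ hb₂ hsz heq
    subst e1; subst e2; subst e3
    rfl
  · -- surjective
    intro T' hT'
    rw [mem_DM] at hT'
    obtain ⟨hT'm, hT'le⟩ := hT'
    obtain ⟨k, L₀, R₀, hL₀, hR₀, hk, rfl⟩ := tam_node_split hT'le
    obtain ⟨hmb, htake, hsub⟩ := (mbin_insL hk).mp hT'm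
    obtain ⟨hbr, hkd⟩ := (vcond_iff m hm hk).mp ⟨htake, hsub⟩
    refine ⟨⟨L₀, R₀, k⟩, ?_, rfl⟩
    rw [Finset.mem_sigma, Finset.mem_sigma]
    refine ⟨mem_DM.mpr ⟨hmb, hL₀⟩, mem_DR.mpr ⟨hR₀, by rwa [List.length_cons, hm']⟩, ?_⟩
    dsimp only
    rw [Finset.mem_range]
    omega
  · -- values
    rintro ⟨L₀, R₀, k⟩ hx
    dsimp only
    rw [Finset.mem_sigma, Finset.mem_sigma] at hx
    dsimp only at hx
    obtain ⟨hL₀, hR₀, hk⟩ := hx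
    rw [mem_DR, List.length_cons, hm'] at hR₀
    rw [Finset.mem_range] at hk
    obtain ⟨-, hb2⟩ := hbound hR₀.2 (by omega : k ≤ leftDepth R₀ - cc m)
    rw [leftDepth_insL _ hb2]

lemma P_leaf (m : ℕ) : P m .leaf = 1 := by
  have hDM : DM m .leaf = {BinTree.leaf} := by
    ext T'
    rw [mem_DM, Finset.mem_singleton]
    constructor
    · rintro ⟨-, h⟩; exact tam_leaf h
    · rintro rfl; exact ⟨IsMBinary.leaf, .refl⟩
  rw [P, hDM]
  simp [leftDepth]

lemma B_eq_P (m : ℕ) (hm : 1 ≤ m) (B : BinTree → Polynomial ℤ)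
    (hleaf : B BinTree.leaf = 1)
    (hrec : ∀ (TL : BinTree) (TRs : List BinTree), TRs.length = m →
      IsMBinary m TL → (∀ S ∈ TRs, IsMBinary m S) →
      B (BinTree.node TL (buildRight TRs)) =
        Polynomial.X * B TL * nestedDelta (TRs.map B)) :
    ∀ T : BinTree, IsMBinary m T → B T = P m T := by
  have key : ∀ n : ℕ, ∀ T : BinTree, T.size ≤ n → IsMBinary m T → B T = P m T := by
    intro n
    induction n with
    | zero =>
      intro T hsz hT
      rw [size_eq_zero (Nat.le_zero.mp hsz), hleaf, P_leaf]
    | succ n ih =>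
      intro T hsz hT
      cases hT with
      | leaf => rw [hleaf, P_leaf]
      | node TL TRs hlen hTL hTRs =>
        have hszT : TL.size + (buildRight TRs).size + 1 ≤ n + 1 := by
          simpa [size] using hsz
        have hszTL : TL.size ≤ n := by omega
        have hszS : ∀ x ∈ TRs, x.size ≤ n := by
          intro x hx
          have := size_buildRight_mem hx
          omega
        rw [hrec TL TRs hlen hTL hTRs, main_eq m hm TL TRs hlen hTL hTRs,
          ih TL hszTL hTL]
        congr 2
        exact List.map_congr_left fun x hx => ih x (hszS x hx) (hTRs x hx)
  exact fun T hT => key T.size T le_rfl hT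

end Stmt18Aux
/-- Every nonempty `m`-binary tree decomposes uniquely into `m`-binary trees
`T_L, T_{R_1}, …, T_{R_m}`, so the recursion
`B^(m)_∅ = 1`, `B^(m)_T = x·B^(m)_{T_L}·Δ(B^(m)_{T_{R_1}}·Δ(⋯·Δ(B^(m)_{T_{R_m}})⋯))`
defines `B` on `m`-binary trees; the coefficient of `x^k` in `B^(m)_T` counts
the `m`-binary trees `T' ≤ T` with `k` nodes on their leftmost branch, and
`B^(m)_T(1)` counts the elements below `T` in the `m`-Tamari lattice. -/
theorem stmt18 (m : ℕ) (hm : 1 ≤ m) (B : BinTree → Polynomial ℤ)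
    (hleaf : B BinTree.leaf = 1)
    (hrec : ∀ (TL : BinTree) (TRs : List BinTree), TRs.length = m →
      IsMBinary m TL → (∀ S ∈ TRs, IsMBinary m S) →
      B (BinTree.node TL (buildRight TRs)) =
        Polynomial.X * B TL * nestedDelta (TRs.map B)) :
    (∀ T : BinTree, IsMBinary m T → T ≠ BinTree.leaf →
      ∃! p : BinTree × List BinTree, p.2.length = m ∧ IsMBinary m p.1 ∧
        (∀ S ∈ p.2, IsMBinary m S) ∧ T = BinTree.node p.1 (buildRight p.2)) ∧
    (∀ T : BinTree, IsMBinary m T → ∀ k : ℕ,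
      (B T).coeff k =
        (({T' : BinTree | IsMBinary m T' ∧ tamariLE T' T ∧
            leftDepth T' = k}).ncard : ℤ) ∧
      (B T).eval 1 =
        (({T' : BinTree | IsMBinary m T' ∧ tamariLE T' T}).ncard : ℤ)) := by
  open Stmt18Aux Polynomial in
  constructor
  · intro T hT hne
    cases hT with
    | leaf => exact absurd rfl hne
    | node TL TRs hlen hTL hTRs =>
      refine ⟨(TL, TRs), ⟨hlen, hTL, hTRs, rfl⟩, ?_⟩
      rintro ⟨TL', TRs'⟩ ⟨hlen', hTL', hTRs', heq⟩
      injection heq with h1 h2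
      have h3 : TRs' = TRs := buildRight_inj (hlen'.trans hlen.symm) h2.symm
      rw [Prod.mk.injEq]
      exact ⟨h1.symm, h3⟩
  · intro T hT k
    have hBP := B_eq_P m hm B hleaf hrec T hT
    constructor
    · rw [hBP, P, finset_sum_coeff]
      simp only [coeff_X_pow]
      rw [Finset.sum_boole]
      have hset : {T' : BinTree | IsMBinary m T' ∧ tamariLE T' T ∧ leftDepth T' = k} =
          ↑((DM m T).filter fun T' => k = leftDepth T') := by
        ext T'
        simp only [Set.mem_setOf_eq, Finset.coe_filter, mem_DM]
        constructor
        · rintro ⟨a, b, c⟩; exact ⟨⟨a, b⟩, c.symm⟩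
        · rintro ⟨⟨a, b⟩, c⟩; exact ⟨a, b, c.symm⟩
      rw [hset, Set.ncard_coe_finset]
    · rw [hBP, P, eval_finset_sum]
      simp only [eval_pow, eval_X, one_pow]
      rw [Finset.sum_const, nsmul_eq_mul, mul_one]
      have hset : {T' : BinTree | IsMBinary m T' ∧ tamariLE T' T} = ↑(DM m T) := by
        ext T'
        simp [mem_DM]
      rw [hset, Set.ncard_coe_finset]
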